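/- Let G be a finite group with an abelian normal subgroup N isomorphic to C2 × C2 that has a complement H in G (so G = N ⋊ H), and assume d(G) > 1/3. Then there exists a nontrivial element of N that is fixed by the conjugation action of every element of H; in particular, the center Z(G) is nontrivial. -/

import Mathlib

set_option linter.unusedSectionVars false
set_option maxHeartbeats 1000000

open Finset

private abbrev K4 := Multiplicative (ZMod 2) × Multiplicative (ZMod 2)

private instance : DecidableEq K4 := fun a b => decidable_of_iff (a.1 = b.1 ∧ a.2 = b.2) (by
  cases a; cases b; simp [Prod.ext_iff])

section KFC

variable {G : Type*} [Group G]

private def kact (N : Subgroup G) [N.Normal] (g : G) (a : N) : N :=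
  ⟨g * a * g⁻¹, ‹N.Normal›.conj_mem a.1 a.2 g⟩

variable {N : Subgroup G} [N.Normal] {H : Subgroup G}

private lemma kact_coe (g : G) (a : N) : (kact N g a : G) = g * a * g⁻¹ := rfl

private lemma kact_one (a : N) : kact N 1 a = a := by
  simp [kact]

private lemma kact_mul (g g' : G) (a : N) : kact N (g * g') a = kact N g (kact N g' a) := by
  simp only [kact, Subtype.ext_iff]
  group

private lemma kact_mul' (g : G) (a b : N) : kact N g (a * b) = kact N g a * kact N g b := by
  simp only [kact, Subtype.ext_iff, Subgroup.coe_mul]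
  group

private lemma kact_one' (g : G) : kact N g 1 = 1 := by
  simp [kact, Subtype.ext_iff]

private lemma kact_inj (g : G) : Function.Injective (kact N g) := by
  intro a b h
  have h' := congrArg Subtype.val h
  simp only [kact_coe] at h'
  apply Subtype.ext
  exact mul_left_cancel (mul_right_cancel h')

private lemma kact_ne_one (g : G) {a : N} (ha : a ≠ 1) : kact N g a ≠ 1 := by
  intro h
  exact ha (kact_inj g (h.trans (kact_one' g).symm))

private lemma kact_eq_iff (g : G) (a : N) : kact N g a = a ↔ g * a = a * g := by
  constructor
  · intro h
    have := congrArg (Subtype.val) h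
    simp only [kact_coe] at this
    calc g * a = (g * a * g⁻¹) * g := by group
    _ = a * g := by rw [this]
  · intro h
    apply Subtype.ext
    simp only [kact_coe]
    rw [h]; group

private lemma kact_inv (g : G) (a : N) (h : kact N g a = a) : kact N g⁻¹ a = a := by
  have : kact N g⁻¹ (kact N g a) = a := by
    rw [← kact_mul]; simp [kact_one]
  rwa [h] at this

private lemma mu_inj (hHN' : H ⊓ N = ⊥) :
    Function.Injective (fun p : H × N => (p.1 : G) * p.2) := by
  rintro ⟨h, a⟩ ⟨k, b⟩ (hp : (h : G) * a = (k : G) * b)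
  have h1 : ((k⁻¹ * h : H) : G) = ((b * a⁻¹ : N) : G) := by
    push_cast
    rw [inv_mul_eq_iff_eq_mul, ← mul_assoc, ← hp]
    group
  have h2 : ((k⁻¹ * h : H) : G) ∈ H ⊓ N := by
    refine Subgroup.mem_inf.2 ⟨SetLike.coe_mem _, ?_⟩
    rw [h1]; exact SetLike.coe_mem _
  rw [hHN', Subgroup.mem_bot] at h2
  have h3 : k⁻¹ * h = 1 := by exact_mod_cast h2
  have hk : h = k := by
    have := congrArg (k * ·) h3
    simpa using this
  subst hk
  have : (a : G) = b := mul_left_cancel hp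
  simp [Prod.ext_iff, Subtype.ext_iff, this]

private lemma mu_surj (hHN : H ⊔ N = ⊤) :
    Function.Surjective (fun p : H × N => (p.1 : G) * p.2) := by
  intro g
  have hg : g ∈ (↑(H ⊔ N) : Set G) := by rw [hHN]; trivial
  rw [Subgroup.mul_normal] at hg
  obtain ⟨h, hh, a, ha, rfl⟩ := hg
  exact ⟨(⟨h, hh⟩, ⟨a, ha⟩), rfl⟩

/-! Klein transported facts -/

private lemma Kcard (e : N ≃* K4) : Nat.card N = 4 := by
  rw [Nat.card_congr e.toEquiv, Nat.card_eq_fintype_card]; rfl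

private lemma Kcomm (e : N ≃* K4) (a b : N) : a * b = b * a := by
  have : ∀ x y : K4, x * y = y * x := by decide
  apply e.injective
  rw [map_mul, map_mul, this]

private lemma Kthird (e : N ≃* K4) (x a b : N) (ha : a ≠ 1) (hb : b ≠ 1) (hab : a ≠ b)
    (hx1 : x ≠ 1) (hxa : x ≠ a) (hxb : x ≠ b) : x = a * b := by
  have key : ∀ x a b : K4, a ≠ 1 → b ≠ 1 → a ≠ b → x ≠ 1 → x ≠ a → x ≠ b → x = a * b := by
    decide
  apply e.injective
  rw [map_mul]
  refine key _ _ _ ?_ ?_ ?_ ?_ ?_ ?_ <;>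
    simp only [ne_eq, ← map_one e, e.injective.eq_iff] <;> assumption

/-! fixed points -/

private def FixSub (N : Subgroup G) [N.Normal] (g : G) : Subgroup N where
  carrier := {x | kact N g x = x}
  one_mem' := kact_one' g
  mul_mem' := by
    intro a b ha hb
    simp only [Set.mem_setOf_eq] at *
    rw [kact_mul', ha, hb]
  inv_mem' := by
    intro a ha
    simp only [Set.mem_setOf_eq] at *
    have h1 : kact N g a⁻¹ = (kact N g a)⁻¹ := by
      apply Subtype.ext
      simp only [kact_coe, Subgroup.coe_inv]
      group
    rw [h1, ha]

private lemma mem_FixSub {g : G} {x : N} : x ∈ FixSub N g ↔ kact N g x = x := Iff.rfl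

private lemma Fcard_filter [Fintype N] [DecidableEq N] (g : G) :
    Nat.card (FixSub N g) = (univ.filter fun x : N => kact N g x = x).card := by
  classical
  rw [Nat.card_eq_fintype_card]
  rw [Fintype.card_subtype]
  apply Finset.card_nbij id (fun x hx => by simpa [mem_FixSub] using hx)
    (fun x _ y _ h => h) (fun x hx => ⟨x, by simpa [mem_FixSub] using hx, rfl⟩)

private lemma Fcard_mem (e : N ≃* K4) (g : G) :
    Nat.card (FixSub N g) = 1 ∨ Nat.card (FixSub N g) = 2 ∨ Nat.card (FixSub N g) = 4 := by
  have hdvd : Nat.card (FixSub N g) ∣ 4 := by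
    rw [← Kcard e]
    exact Subgroup.card_subgroup_dvd_card _
  set d := Nat.card (FixSub N g) with hd
  clear_value d
  have hle : d ≤ 4 := Nat.le_of_dvd (by norm_num) hdvd
  interval_cases d <;> revert hdvd <;> decide


private lemma Fcard_one {g : G} (h1 : Nat.card (FixSub N g) = 1) :
    ∀ x : N, kact N g x = x → x = 1 := by
  intro x hx
  have : FixSub N g = ⊥ := Subgroup.eq_bot_of_card_eq _ h1
  have := this ▸ (mem_FixSub.2 hx)
  simpa [Subgroup.mem_bot] using this

private lemma Fcard_four_of (e : N ≃* K4) {g : G} (hall : ∀ x : N, kact N g x = x) :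
    Nat.card (FixSub N g) = 4 := by
  have : FixSub N g = ⊤ := by
    ext x; simpa [mem_FixSub] using hall x
  rw [this, Subgroup.card_top, Kcard e]

private lemma Fcard_two (e : N ≃* K4) {g : G} (h2 : Nat.card (FixSub N g) = 2) :
    ∃ a : N, a ≠ 1 ∧ kact N g a = a ∧ ∀ x : N, kact N g x = x → x = 1 ∨ x = a := by
  classical
  haveI : Finite N := Finite.of_equiv _ e.symm.toEquiv
  letI : Fintype N := Fintype.ofFinite _
  set s := univ.filter (fun x : N => kact N g x = x) with hs
  have hcard : s.card = 2 := by rw [hs, ← Fcard_filter]; exact h2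
  have h1s : (1 : N) ∈ s := by simp [hs, kact_one']
  have hpos : 0 < (s.erase 1).card := by
    rw [Finset.card_erase_of_mem h1s, hcard]; norm_num
  obtain ⟨a, ha⟩ := Finset.card_pos.1 hpos
  have haa := Finset.mem_erase.1 ha
  refine ⟨a, haa.1, (Finset.mem_filter.1 haa.2).2, ?_⟩
  intro x hx
  have hsub : ({1, a} : Finset N) ⊆ s := by
    intro y hy
    rcases Finset.mem_insert.1 hy with rfl | hy
    · exact h1s
    · rw [Finset.mem_singleton.1 hy]; exact haa.2
  have hseq : ({1, a} : Finset N) = s := by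
    apply Finset.eq_of_subset_of_card_le hsub
    rw [hcard, Finset.card_insert_of_notMem (by simp [Ne.symm haa.1]), Finset.card_singleton]
  have hxs : x ∈ s := Finset.mem_filter.2 ⟨Finset.mem_univ _, hx⟩
  rw [← hseq] at hxs
  simpa using hxs

private lemma bc_lemma (e : N ≃* K4) {h k : G} (hcomm : h * k = k * h)
    (hh : Nat.card (FixSub N h) = 2) (hk : Nat.card (FixSub N k) = 1) : False := by
  obtain ⟨a, ha1, hfix, huniq⟩ := Fcard_two e hh
  set a' := kact N k a with ha'
  have ha'1 : a' ≠ 1 := kact_ne_one _ ha1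
  have hfix' : kact N h a' = a' := by
    rw [ha', ← kact_mul, hcomm, kact_mul, hfix]
  rcases huniq a' hfix' with h1 | h1
  · exact ha'1 h1
  · have : a = 1 := Fcard_one hk a (ha' ▸ h1)
    exact ha1 this


/-! the commuting condition on coordinates -/

private def Kcond (h k : H) (ab : N × N) : Prop :=
  ((h : G) * ab.1) * ((k : G) * ab.2) = ((k : G) * ab.2) * ((h : G) * ab.1)

private lemma kcond_comm (hHN' : H ⊓ N = ⊥) {h k : H} {ab : N × N} (hc : Kcond h k ab) :
    h * k = k * h := by
  have lhs : ((h : G) * ab.1) * ((k : G) * ab.2) =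
      ((h * k : H) : G) * ((kact N ((k : G))⁻¹ ab.1 * ab.2 : N) : G) := by
    push_cast [kact_coe]
    group
  have rhs : ((k : G) * ab.2) * ((h : G) * ab.1) =
      ((k * h : H) : G) * ((kact N ((h : G))⁻¹ ab.2 * ab.1 : N) : G) := by
    push_cast [kact_coe]
    group
  have := mu_inj hHN' (a₁ := (h * k, kact N ((k : G))⁻¹ ab.1 * ab.2))
    (a₂ := (k * h, kact N ((h : G))⁻¹ ab.2 * ab.1)) (by
      simp only
      rw [← lhs, ← rhs, hc])
  exact (Prod.ext_iff.1 this).1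

private lemma kcond_card_le_left (e : N ≃* K4) (h k : H) :
    Nat.card {ab : N × N // Kcond h k ab} ≤ 4 * Nat.card (FixSub N (h : G)) := by
  classical
  haveI : Finite N := Finite.of_equiv _ e.symm.toEquiv
  letI : Fintype N := Fintype.ofFinite N
  rw [Nat.card_eq_fintype_card, Fintype.card_subtype]
  set s := univ.filter (fun ab : N × N => Kcond h k ab) with hs
  rw [Finset.card_eq_sum_card_fiberwise (f := Prod.fst) (t := univ)
    (fun x _ => Finset.mem_univ _)]
  have hbound : ∀ a : N, (s.filter fun ab => ab.1 = a).card ≤ Nat.card (FixSub N (h : G)) := by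
    intro a
    set sa := s.filter (fun ab => ab.1 = a) with hsa
    rcases Finset.eq_empty_or_nonempty sa with he | ⟨⟨a₀, b₀⟩, h₀⟩
    · simp [he]
    · have h₀' := Finset.mem_filter.1 h₀
      have ha₀ : a₀ = a := h₀'.2
      have hc₀ : Kcond h k (a, b₀) := by
        have := (Finset.mem_filter.1 h₀'.1).2
        rwa [ha₀] at this
      rw [Fcard_filter]
      apply Finset.card_le_card_of_injOn (fun ab => kact N (k : G) (ab.2 * b₀⁻¹))
      · rintro ⟨a', b⟩ hab
        have hab' := Finset.mem_filter.1 hab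
        have ha' : a' = a := hab'.2
        have hcb : Kcond h k (a, b) := by
          have := (Finset.mem_filter.1 hab'.1).2
          rwa [ha'] at this
        simp only [Finset.mem_filter, Finset.mem_univ, true_and]
        -- show kact h (kact k (b * b₀⁻¹)) = kact k (b * b₀⁻¹)
        have c1 : Commute ((h : G) * a) ((k : G) * b) := hcb
        have c2 : Commute ((h : G) * a) ((k : G) * b₀) := hc₀
        have c3 : Commute ((h : G) * a) (((k : G) * b) * ((k : G) * b₀)⁻¹) :=
          c1.mul_right c2.inv_right
        have hcoe : (((kact N (k : G) (b * b₀⁻¹)) : N) : G) = ((k : G) * b) * ((k : G) * b₀)⁻¹ := by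
          push_cast [kact_coe]
          group
        have c4 : Commute ((a : G)) ((kact N (k : G) (b * b₀⁻¹) : N) : G) := by
          have h' := Kcomm e a (kact N (k : G) (b * b₀⁻¹))
          have h'' := congrArg (Subtype.val) h'
          push_cast at h''
          exact h''
        have c5 : Commute ((h : G)) ((kact N (k : G) (b * b₀⁻¹) : N) : G) := by
          have c3' : Commute ((h : G) * a) ((kact N (k : G) (b * b₀⁻¹) : N) : G) := by
            rwa [hcoe]
          have c6 := Commute.mul_left c3' c4.inv_left
          simpa using c6
        rw [Finset.mem_coe, Finset.mem_filter]
        refine ⟨Finset.mem_univ _, ?_⟩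
        rw [kact_eq_iff]
        exact c5
      · rintro ⟨a', b⟩ hab ⟨a'', b'⟩ hab' heq
        have hab := Finset.mem_filter.1 (Finset.mem_coe.1 hab)
        have hab' := Finset.mem_filter.1 (Finset.mem_coe.1 hab')
        have h1 : b * b₀⁻¹ = b' * b₀⁻¹ := kact_inj _ heq
        have h2 : b = b' := by
          have := congrArg (· * b₀) h1
          simpa using this
        have h3 : a' = a'' := by
          have e1 : a' = a := hab.2
          have e2 : a'' = a := hab'.2
          rw [e1, e2]
        simp [h2, h3]
  calc ∑ a : N, (s.filter fun ab => ab.1 = a).card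
      ≤ ∑ _a : N, Nat.card (FixSub N (h : G)) := Finset.sum_le_sum fun a _ => hbound a
    _ = 4 * Nat.card (FixSub N (h : G)) := by
        rw [Finset.sum_const, Finset.card_univ, ← Nat.card_eq_fintype_card, Kcard e, smul_eq_mul]


private lemma kcond_card_le_right (e : N ≃* K4) (h k : H) :
    Nat.card {ab : N × N // Kcond h k ab} ≤ 4 * Nat.card (FixSub N (k : G)) := by
  classical
  haveI : Finite N := Finite.of_equiv _ e.symm.toEquiv
  letI : Fintype N := Fintype.ofFinite N
  rw [Nat.card_eq_fintype_card, Fintype.card_subtype]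
  set s := univ.filter (fun ab : N × N => Kcond h k ab) with hs
  rw [Finset.card_eq_sum_card_fiberwise (f := Prod.snd) (t := univ)
    (fun x _ => Finset.mem_univ _)]
  have hbound : ∀ b : N, (s.filter fun ab => ab.2 = b).card ≤ Nat.card (FixSub N (k : G)) := by
    intro b
    set sb := s.filter (fun ab => ab.2 = b) with hsb
    rcases Finset.eq_empty_or_nonempty sb with he | ⟨⟨a₀, b₀⟩, h₀⟩
    · simp [he]
    · have h₀' := Finset.mem_filter.1 h₀
      have hb₀ : b₀ = b := h₀'.2
      have hc₀ : Kcond h k (a₀, b) := by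
        have := (Finset.mem_filter.1 h₀'.1).2
        rwa [hb₀] at this
      rw [Fcard_filter]
      apply Finset.card_le_card_of_injOn (fun ab => kact N (h : G) (ab.1 * a₀⁻¹))
      · rintro ⟨a, b'⟩ hab
        have hab' := Finset.mem_filter.1 hab
        have hb' : b' = b := hab'.2
        have hca : Kcond h k (a, b) := by
          have := (Finset.mem_filter.1 hab'.1).2
          rwa [hb'] at this
        simp only [Finset.mem_filter, Finset.mem_univ, true_and]
        have c1 : Commute ((h : G) * a) ((k : G) * b) := hca
        have c2 : Commute ((h : G) * a₀) ((k : G) * b) := hc₀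
        have c3 := Commute.mul_left c1 c2.inv_left
        have hcoe : (((kact N (h : G) (a * a₀⁻¹)) : N) : G) =
            ((h : G) * a) * ((h : G) * a₀)⁻¹ := by
          push_cast [kact_coe]
          group
        have c4 : Commute ((kact N (h : G) (a * a₀⁻¹) : N) : G) ((b : G)) := by
          have h' := Kcomm e (kact N (h : G) (a * a₀⁻¹)) b
          have h'' := congrArg (Subtype.val) h'
          push_cast at h''
          exact h''
        have c5 : Commute ((kact N (h : G) (a * a₀⁻¹) : N) : G) ((k : G)) := by
          have c3' : Commute ((kact N (h : G) (a * a₀⁻¹) : N) : G) ((k : G) * b) := by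
            rwa [hcoe]
          have c6 := Commute.mul_right c3' c4.inv_right
          simpa using c6
        rw [Finset.mem_coe, Finset.mem_filter]
        refine ⟨Finset.mem_univ _, ?_⟩
        rw [kact_eq_iff]
        exact c5.symm
      · rintro ⟨a, b'⟩ hab ⟨a', b''⟩ hab' heq
        have hab := Finset.mem_filter.1 (Finset.mem_coe.1 hab)
        have hab' := Finset.mem_filter.1 (Finset.mem_coe.1 hab')
        have h1 : a * a₀⁻¹ = a' * a₀⁻¹ := kact_inj _ heq
        have h2 : a = a' := by
          have := congrArg (· * a₀) h1
          simpa using this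
        have h3 : b' = b'' := by
          have e1 : b' = b := hab.2
          have e2 : b'' = b := hab'.2
          rw [e1, e2]
        simp [h2, h3]
  calc ∑ b : N, (s.filter fun ab => ab.2 = b).card
      ≤ ∑ _b : N, Nat.card (FixSub N (k : G)) := Finset.sum_le_sum fun b _ => hbound b
    _ = 4 * Nat.card (FixSub N (k : G)) := by
        rw [Finset.sum_const, Finset.card_univ, ← Nat.card_eq_fintype_card, Kcard e, smul_eq_mul]

private lemma kcond_zero (e : N ≃* K4) (hHN' : H ⊓ N = ⊥) {h k : H}
    (hbc : (Nat.card (FixSub N (h : G)) = 2 ∧ Nat.card (FixSub N (k : G)) = 1) ∨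
           (Nat.card (FixSub N (h : G)) = 1 ∧ Nat.card (FixSub N (k : G)) = 2)) :
    Nat.card {ab : N × N // Kcond h k ab} = 0 := by
  have : IsEmpty {ab : N × N // Kcond h k ab} := by
    constructor
    rintro ⟨ab, hab⟩
    have hcm : h * k = k * h := kcond_comm hHN' hab
    have hcmG : (h : G) * k = (k : G) * h := by exact_mod_cast congrArg Subtype.val hcm
    rcases hbc with ⟨h2, k1⟩ | ⟨h1, k2⟩
    · exact bc_lemma e hcmG h2 k1
    · exact bc_lemma e hcmG.symm k2 h1
  exact Nat.card_of_isEmpty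


/-! transitivity of the conjugation action on nontrivial elements -/

private lemma ktrans (e : N ≃* K4)
    (hmoved : ∀ a : N, a ≠ 1 → ∃ h : H, kact N (h : G) a ≠ a)
    {a y : N} (ha : a ≠ 1) (hy : y ≠ 1) : ∃ h : H, kact N (h : G) a = y := by
  classical
  haveI : Finite N := Finite.of_equiv _ e.symm.toEquiv
  letI : Fintype N := Fintype.ofFinite N
  by_contra hno
  push_neg at hno
  obtain ⟨h₁, hh₁⟩ := hmoved a ha
  obtain ⟨h₂, hh₂⟩ := hmoved y hy
  set x' := kact N (h₁ : G) a with hx'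
  set y' := kact N (h₂ : G) y with hy'
  have d2 : x' ≠ 1 := kact_ne_one _ ha
  have d4 : y' ≠ 1 := kact_ne_one _ hy
  have d6 : a ≠ y := by
    intro hh
    apply hno 1
    rw [OneMemClass.coe_one, kact_one, hh]
  have d7 : y' ≠ a := by
    intro hh
    apply hno h₂⁻¹
    have h9 : kact N ((h₂ : G))⁻¹ y' = y := by
      rw [hy', ← kact_mul, inv_mul_cancel, kact_one]
    rw [show ((h₂⁻¹ : H) : G) = ((h₂ : G))⁻¹ by push_cast; rfl, ← hh]
    exact h9
  have d8 : x' ≠ y := hno h₁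
  have d9 : x' ≠ y' := by
    intro hh
    apply hno (h₂⁻¹ * h₁)
    have h9 : kact N ((h₂ : G))⁻¹ x' = y := by
      rw [hh, hy', ← kact_mul, inv_mul_cancel, kact_one]
    rw [show ((h₂⁻¹ * h₁ : H) : G) = ((h₂ : G))⁻¹ * (h₁ : G) by push_cast; rfl]
    rw [kact_mul, ← hx']
    exact h9
  have d5 : x' ≠ a := hh₁
  have dyy : y ≠ y' := Ne.symm hh₂
  have n1 : (1 : N) ∉ ({a, x', y, y'} : Finset N) := by
    simp only [Finset.mem_insert, Finset.mem_singleton]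
    push_neg
    exact ⟨Ne.symm ha, Ne.symm d2, Ne.symm hy, Ne.symm d4⟩
  have n2 : a ∉ ({x', y, y'} : Finset N) := by
    simp only [Finset.mem_insert, Finset.mem_singleton]
    push_neg
    exact ⟨Ne.symm d5, d6, Ne.symm d7⟩
  have n3 : x' ∉ ({y, y'} : Finset N) := by
    simp only [Finset.mem_insert, Finset.mem_singleton]
    push_neg
    exact ⟨d8, d9⟩
  have n4 : y ∉ ({y'} : Finset N) := by
    simp only [Finset.mem_singleton]
    exact dyy
  have h5 : ({1, a, x', y, y'} : Finset N).card = 5 := by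
    rw [Finset.card_insert_of_notMem n1, Finset.card_insert_of_notMem n2,
      Finset.card_insert_of_notMem n3, Finset.card_insert_of_notMem n4,
      Finset.card_singleton]
  have hle : ({1, a, x', y, y'} : Finset N).card ≤ 4 := by
    have hcu := Finset.card_le_univ ({1, a, x', y, y'} : Finset N)
    rwa [← Nat.card_eq_fintype_card, Kcard e] at hcu
  omega

/-! stabilizers -/

private def StabH (N : Subgroup G) [N.Normal] (H : Subgroup G) (a : N) : Subgroup H where
  carrier := {h : H | kact N (h : G) a = a}
  one_mem' := by
    show kact N ((1 : H) : G) a = a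
    rw [OneMemClass.coe_one, kact_one]
  mul_mem' := by
    intro x y hx hy
    show kact N ((x * y : H) : G) a = a
    rw [Subgroup.coe_mul, kact_mul]
    show kact N (x : G) (kact N (y : G) a) = a
    rw [show kact N (y : G) a = a from hy]
    exact hx
  inv_mem' := by
    intro x hx
    show kact N ((x⁻¹ : H) : G) a = a
    rw [show ((x⁻¹ : H) : G) = ((x : G))⁻¹ by push_cast; rfl]
    exact kact_inv _ _ hx

private lemma mem_StabH {a : N} {h : H} : h ∈ StabH N H a ↔ kact N (h : G) a = a := Iff.rfl

private lemma stab_index (e : N ≃* K4)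
    (hmoved : ∀ a : N, a ≠ 1 → ∃ h : H, kact N (h : G) a ≠ a)
    {a : N} (ha : a ≠ 1) : 3 * Nat.card (StabH N H a) = Nat.card H := by
  classical
  haveI : Finite N := Finite.of_equiv _ e.symm.toEquiv
  letI : Fintype N := Fintype.ofFinite N
  have hquot : Nat.card (H ⧸ StabH N H a) = 3 := by
    have hresp : ∀ x y : H, (QuotientGroup.leftRel (StabH N H a)) x y →
        (⟨kact N (x : G) a, kact_ne_one _ ha⟩ : {y : N // y ≠ 1}) =
        ⟨kact N (y : G) a, kact_ne_one _ ha⟩ := by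
      intro x y hxy
      have hm : x⁻¹ * y ∈ StabH N H a := (QuotientGroup.leftRel_apply).1 hxy
      have hm' : kact N ((x⁻¹ * y : H) : G) a = a := hm
      apply Subtype.ext
      show kact N (x : G) a = kact N (y : G) a
      have h2 := congrArg (kact N (x : G)) hm'
      rw [← kact_mul] at h2
      have h3 : (x : G) * ((x⁻¹ * y : H) : G) = (y : G) := by push_cast; group
      rw [h3] at h2
      exact h2.symm
    have f : (H ⧸ StabH N H a) ≃ {y : N // y ≠ 1} := by
      refine Equiv.ofBijective (Quotient.lift
        (fun h : H => (⟨kact N (h : G) a, kact_ne_one _ ha⟩ : {y : N // y ≠ 1})) hresp)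
        ⟨?_, ?_⟩
      · intro q1 q2
        induction q1 using Quotient.ind
        induction q2 using Quotient.ind
        rename_i x y
        intro hxy
        have hxy2 : (⟨kact N (x : G) a, kact_ne_one _ ha⟩ : {y : N // y ≠ 1}) =
            ⟨kact N (y : G) a, kact_ne_one _ ha⟩ := hxy
        have hxy' : kact N (x : G) a = kact N (y : G) a := congrArg Subtype.val hxy2
        apply Quotient.sound
        have hmem : x⁻¹ * y ∈ StabH N H a := by
          show kact N ((x⁻¹ * y : H) : G) a = a
          rw [Subgroup.coe_mul, kact_mul, ← hxy',
            show ((x⁻¹ : H) : G) = ((x : G))⁻¹ by push_cast; rfl,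
            ← kact_mul, inv_mul_cancel, kact_one]
        exact (QuotientGroup.leftRel_apply).2 hmem
      · rintro ⟨y, hy⟩
        obtain ⟨h, hh⟩ := ktrans e hmoved ha hy
        exact ⟨Quotient.mk _ h, Subtype.ext hh⟩
    rw [Nat.card_congr f, Nat.card_eq_fintype_card, Fintype.card_subtype]
    rw [show (univ.filter fun y : N => y ≠ 1) = univ.erase 1 from Finset.filter_ne' univ 1]
    rw [Finset.card_erase_of_mem (Finset.mem_univ _), Finset.card_univ,
      ← Nat.card_eq_fintype_card, Kcard e]
  have hidx := Subgroup.index_mul_card (StabH N H a)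
  rw [Subgroup.index_eq_card, hquot] at hidx
  exact hidx


private lemma sum_F (e : N ≃* K4)
    (hmoved : ∀ a : N, a ≠ 1 → ∃ h : H, kact N (h : G) a ≠ a) [Fintype H] [Fintype N] :
    ∑ h : H, Nat.card (FixSub N (h : G)) = 2 * Nat.card H := by
  classical
  have hswap : ∑ h : H, Nat.card (FixSub N (h : G)) =
      ∑ x : N, (univ.filter fun h : H => kact N (h : G) x = x).card := by
    calc ∑ h : H, Nat.card (FixSub N (h : G))
        = ∑ h : H, ∑ x : N, (if kact N (h : G) x = x then 1 else 0) := by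
          refine Finset.sum_congr rfl fun h _ => ?_
          rw [Fcard_filter, Finset.card_filter]
      _ = ∑ x : N, ∑ h : H, (if kact N (h : G) x = x then 1 else 0) := Finset.sum_comm
      _ = ∑ x : N, (univ.filter fun h : H => kact N (h : G) x = x).card := by
          refine Finset.sum_congr rfl fun x _ => (Finset.card_filter _ _).symm
  have hstab : ∀ x : N, x ≠ 1 →
      3 * (univ.filter fun h : H => kact N (h : G) x = x).card = Nat.card H := by
    intro x hx
    have h1 : Nat.card (StabH N H x) = (univ.filter fun h : H => kact N (h : G) x = x).card := by
      rw [Nat.card_eq_fintype_card, Fintype.card_subtype]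
      apply Finset.card_nbij id (fun h hh => by simpa [mem_StabH] using hh)
        (fun a _ b _ hab => hab) (fun h hh => ⟨h, by simpa [mem_StabH] using hh, rfl⟩)
    rw [← h1]
    exact stab_index e hmoved hx
  have hone : (univ.filter fun h : H => kact N (h : G) (1 : N) = 1).card = Nat.card H := by
    rw [Finset.filter_true_of_mem (fun h _ => kact_one' _), Finset.card_univ,
      Nat.card_eq_fintype_card]
  have hkey : 3 * ∑ h : H, Nat.card (FixSub N (h : G)) = 6 * Nat.card H := by
    rw [hswap]
    rw [← Finset.sum_erase_add univ _ (Finset.mem_univ (1 : N))]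
    rw [Nat.left_distrib]
    have herase : 3 * ∑ x ∈ univ.erase (1 : N),
        (univ.filter fun h : H => kact N (h : G) x = x).card = 3 * Nat.card H := by
      rw [Finset.mul_sum]
      rw [Finset.sum_congr rfl (fun x hx => hstab x (Finset.mem_erase.1 hx).1)]
      rw [Finset.sum_const, Finset.card_erase_of_mem (Finset.mem_univ _), Finset.card_univ,
        ← Nat.card_eq_fintype_card, Kcard e, smul_eq_mul]
    rw [herase, hone]
    ring
  omega

private lemma B_le (e : N ≃* K4) [Fintype H] [Fintype N] :
    (univ.filter fun h : H => Nat.card (FixSub N (h : G)) = 2).card ≤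
      3 * (univ.filter fun h : H => Nat.card (FixSub N (h : G)) = 4).card := by
  classical
  set A := univ.filter (fun h : H => Nat.card (FixSub N (h : G)) = 4) with hA
  set B := univ.filter (fun h : H => Nat.card (FixSub N (h : G)) = 2) with hB
  set T : Finset N := univ.erase 1 with hT
  have hsub : B ⊆ T.biUnion (fun a => B.filter fun h : H => kact N (h : G) a = a) := by
    intro h hh
    obtain ⟨a, ha1, hfix, -⟩ := Fcard_two e (Finset.mem_filter.1 hh).2
    exact Finset.mem_biUnion.2 ⟨a, Finset.mem_erase.2 ⟨ha1, Finset.mem_univ _⟩,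
      Finset.mem_filter.2 ⟨hh, hfix⟩⟩
  have hBa : ∀ a ∈ T, (B.filter fun h : H => kact N (h : G) a = a).card ≤ A.card := by
    intro a haT
    have ha1 : a ≠ 1 := (Finset.mem_erase.1 haT).1
    rcases Finset.eq_empty_or_nonempty (B.filter fun h : H => kact N (h : G) a = a) with he | ⟨t, ht⟩
    · simp [he]
    · have htB := Finset.mem_filter.1 ht
      have htfix : kact N (t : G) a = a := htB.2
      have ht2 : Nat.card (FixSub N (t : G)) = 2 := (Finset.mem_filter.1 htB.1).2
      -- key: for h, t in B both fixing a, t⁻¹ * h fixes everything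
      have key : ∀ h : H, Nat.card (FixSub N (h : G)) = 2 → kact N (h : G) a = a →
          ∀ x : N, kact N ((t⁻¹ * h : H) : G) x = x := by
        intro h hh2 hhfix x
        -- the unique nontrivial fixed point of any such element is a
        have huniq : ∀ g : H, Nat.card (FixSub N (g : G)) = 2 → kact N (g : G) a = a →
            ∀ z : N, z ≠ 1 → z ≠ a → kact N (g : G) z = a * z := by
          intro g hg2 hgfix z hz1 hza
          obtain ⟨ag, hag1, hagfix, hguniq⟩ := Fcard_two e hg2
          have haag : a = ag := by
            rcases hguniq a hgfix with h' | h'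
            · exact absurd h' ha1
            · exact h'
          set zz := kact N (g : G) z with hzz
          have hzz1 : zz ≠ 1 := kact_ne_one _ hz1
          have hzza : zz ≠ a := by
            intro hcon
            have : kact N ((g : G))⁻¹ zz = z := by
              rw [hzz, ← kact_mul, inv_mul_cancel, kact_one]
            rw [hcon] at this
            have hfixinv : kact N ((g : G))⁻¹ a = a := kact_inv _ _ hgfix
            rw [hfixinv] at this
            exact hza this.symm
          have hzzz : zz ≠ z := by
            intro hcon
            rcases hguniq z (hzz ▸ hcon) with h' | h'
            · exact hz1 h'
            · rw [haag] at hza; exact hza h'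
          exact Kthird e zz a z ha1 hz1 (Ne.symm hza) hzz1 hzza hzzz
        -- now prove the goal by cases on x
        have hcoe : ((t⁻¹ * h : H) : G) = ((t : G))⁻¹ * (h : G) := by push_cast; rfl
        by_cases hx1 : x = 1
        · rw [hx1, kact_one']
        by_cases hxa : x = a
        · rw [hxa, hcoe, kact_mul]
          rw [hhfix]
          exact kact_inv _ _ htfix
        · have hhx : kact N (h : G) x = a * x := huniq h hh2 hhfix x hx1 hxa
          have htx : kact N (t : G) x = a * x := huniq t ht2 htfix x hx1 hxa
          rw [hcoe, kact_mul, hhx, ← htx, ← kact_mul, inv_mul_cancel, kact_one]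
      apply Finset.card_le_card_of_injOn (fun h => t⁻¹ * h)
      · intro h hh
        have hh' := Finset.mem_filter.1 hh
        have hh2 : Nat.card (FixSub N (h : G)) = 2 := (Finset.mem_filter.1 hh'.1).2
        rw [hA]
        refine Finset.mem_filter.2 ⟨Finset.mem_univ _, ?_⟩
        exact Fcard_four_of e (key h hh2 hh'.2)
      · intro x _ y _ hxy
        exact mul_left_cancel hxy
  calc B.card ≤ (T.biUnion (fun a => B.filter fun h : H => kact N (h : G) a = a)).card :=
        Finset.card_le_card hsub
    _ ≤ ∑ a ∈ T, (B.filter fun h : H => kact N (h : G) a = a).card := Finset.card_biUnion_le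
    _ ≤ ∑ _a ∈ T, A.card := Finset.sum_le_sum hBa
    _ = 3 * A.card := by
        rw [Finset.sum_const, hT, Finset.card_erase_of_mem (Finset.mem_univ _),
          Finset.card_univ, ← Nat.card_eq_fintype_card, Kcard e, smul_eq_mul]


private lemma card_comm_eq [Finite G] [Fintype H] (hHN : H ⊔ N = ⊤) (hHN' : H ⊓ N = ⊥) :
    Nat.card { p : G × G // Commute p.1 p.2 } =
      ∑ hk : H × H, Nat.card {ab : N × N // Kcond hk.1 hk.2 ab} := by
  classical
  have hinj := mu_inj (G := G) (N := N) (H := H) hHN'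
  have hsurj := mu_surj (G := G) (N := N) (H := H) hHN
  have Φ : (Σ hk : H × H, {ab : N × N // Kcond hk.1 hk.2 ab}) ≃
      { p : G × G // Commute p.1 p.2 } := by
    refine Equiv.ofBijective
      (fun x => ⟨((x.1.1 : G) * x.2.1.1, (x.1.2 : G) * x.2.1.2), x.2.2⟩) ⟨?_, ?_⟩
    · rintro ⟨⟨h, k⟩, ⟨⟨a, b⟩, pf⟩⟩ ⟨⟨h', k'⟩, ⟨⟨a', b'⟩, pf'⟩⟩ heq
      replace heq := Prod.ext_iff.1 (congrArg Subtype.val heq)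
      have e1 : ((h, a) : H × N) = (h', a') := hinj heq.1
      have e2 : ((k, b) : H × N) = (k', b') := hinj heq.2
      simp only [Prod.ext_iff] at e1 e2
      obtain ⟨rfl, rfl⟩ := e1
      obtain ⟨rfl, rfl⟩ := e2
      rfl
    · rintro ⟨⟨x, y⟩, pf⟩
      obtain ⟨⟨h, a⟩, rfl⟩ := hsurj x
      obtain ⟨⟨k, b⟩, rfl⟩ := hsurj y
      exact ⟨⟨(h, k), ⟨(a, b), pf⟩⟩, rfl⟩
  rw [← Nat.card_congr Φ]
  letI : ∀ hk : H × H, Fintype {ab : N × N // Kcond hk.1 hk.2 ab} :=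
    fun hk => Fintype.ofFinite _
  rw [Nat.card_eq_fintype_card, Fintype.card_sigma]
  exact Finset.sum_congr rfl fun hk _ => (Nat.card_eq_fintype_card).symm

private lemma main_bound [Finite G] (e : N ≃* K4) (hHN : H ⊔ N = ⊤) (hHN' : H ⊓ N = ⊥)
    (hmoved : ∀ a : N, a ≠ 1 → ∃ h : H, kact N (h : G) a ≠ a) :
    commProb G ≤ 1 / 3 := by
  classical
  letI : Fintype H := Fintype.ofFinite H
  letI : Fintype N := Fintype.ofFinite N
  set n := Nat.card H with hn
  set A := univ.filter (fun h : H => Nat.card (FixSub N (h : G)) = 4) with hA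
  set B := univ.filter (fun h : H => Nat.card (FixSub N (h : G)) = 2) with hB
  set C := univ.filter (fun h : H => Nat.card (FixSub N (h : G)) = 1) with hC
  have htri : ∀ h : H, Nat.card (FixSub N (h : G)) = 1 ∨ Nat.card (FixSub N (h : G)) = 2 ∨
      Nat.card (FixSub N (h : G)) = 4 := fun h => Fcard_mem e _
  have hpart : ∀ f : H → ℕ,
      ∑ h : H, f h = (∑ h ∈ A, f h) + (∑ h ∈ B, f h) + (∑ h ∈ C, f h) := by
    intro f
    have h1 := Finset.sum_filter_add_sum_filter_not univ
      (fun h : H => Nat.card (FixSub N (h : G)) = 4) f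
    have h2 := Finset.sum_filter_add_sum_filter_not
      (univ.filter (fun h : H => ¬ Nat.card (FixSub N (h : G)) = 4))
      (fun h : H => Nat.card (FixSub N (h : G)) = 2) f
    have e1 : (univ.filter (fun h : H => ¬ Nat.card (FixSub N (h : G)) = 4)).filter
        (fun h : H => Nat.card (FixSub N (h : G)) = 2) = B := by
      rw [Finset.filter_filter, hB]
      apply Finset.filter_congr
      intro h _
      have := htri h
      constructor
      · exact fun hh => hh.2
      · intro hh; exact ⟨by omega, hh⟩
    have e2 : (univ.filter (fun h : H => ¬ Nat.card (FixSub N (h : G)) = 4)).filter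
        (fun h : H => ¬ Nat.card (FixSub N (h : G)) = 2) = C := by
      rw [Finset.filter_filter, hC]
      apply Finset.filter_congr
      intro h _
      have := htri h
      constructor
      · intro hh; omega
      · intro hh; omega
    rw [e1, e2] at h2
    rw [← h1, ← h2, hA]
    ring
  have hn_part : n = A.card + B.card + C.card := by
    have := hpart (fun _ => 1)
    simpa [Finset.sum_const, hn, Nat.card_eq_fintype_card, Finset.card_univ] using this
  have hSF : 4 * A.card + 2 * B.card + C.card = 2 * n := by
    have h0 := sum_F e hmoved (H := H)
    rw [hpart (fun h : H => Nat.card (FixSub N (h : G)))] at h0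
    have cA : ∑ h ∈ A, Nat.card (FixSub N (h : G)) = 4 * A.card := by
      rw [Finset.sum_congr rfl (fun h hh => (Finset.mem_filter.1 hh).2), Finset.sum_const,
        smul_eq_mul, mul_comm]
    have cB : ∑ h ∈ B, Nat.card (FixSub N (h : G)) = 2 * B.card := by
      rw [Finset.sum_congr rfl (fun h hh => (Finset.mem_filter.1 hh).2), Finset.sum_const,
        smul_eq_mul, mul_comm]
    have cC : ∑ h ∈ C, Nat.card (FixSub N (h : G)) = C.card := by
      rw [Finset.sum_congr rfl (fun h hh => (Finset.mem_filter.1 hh).2), Finset.sum_const,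
        smul_eq_mul, mul_one]
    rw [cA, cB, cC] at h0
    rw [h0, hn]
  have hγ : C.card = 2 * A.card := by omega
  have hβ : B.card ≤ 3 * A.card := B_le e
  -- pointwise bound
  set w : H → H → ℕ := fun h k =>
    if (Nat.card (FixSub N (h : G)) = 2 ∧ Nat.card (FixSub N (k : G)) = 1) ∨
       (Nat.card (FixSub N (h : G)) = 1 ∧ Nat.card (FixSub N (k : G)) = 2) then 0
    else 4 * min (Nat.card (FixSub N (h : G))) (Nat.card (FixSub N (k : G))) with hw
  have hpt : ∀ h k : H, Nat.card {ab : N × N // Kcond h k ab} ≤ w h k := by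
    intro h k
    by_cases hbc : (Nat.card (FixSub N (h : G)) = 2 ∧ Nat.card (FixSub N (k : G)) = 1) ∨
       (Nat.card (FixSub N (h : G)) = 1 ∧ Nat.card (FixSub N (k : G)) = 2)
    · rw [hw]
      simp only [if_pos hbc]
      rw [kcond_zero e hHN' hbc]
    · rw [hw]
      simp only [if_neg hbc]
      rcases le_total (Nat.card (FixSub N (h : G))) (Nat.card (FixSub N (k : G))) with hm | hm
      · rw [min_eq_left hm]; exact kcond_card_le_left e h k
      · rw [min_eq_right hm]; exact kcond_card_le_right e h k
  have hPle : Nat.card { p : G × G // Commute p.1 p.2 } ≤ ∑ h : H, ∑ k : H, w h k := by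
    rw [card_comm_eq hHN hHN', Fintype.sum_prod_type]
    exact Finset.sum_le_sum fun h _ => Finset.sum_le_sum fun k _ => hpt h k
  -- row sums
  have hrowA : ∀ h : H, Nat.card (FixSub N (h : G)) = 4 →
      ∑ k : H, w h k = 16 * A.card + 8 * B.card + 4 * C.card := by
    intro h hh
    rw [hpart (w h)]
    have rA : ∑ k ∈ A, w h k = A.card * 16 := Finset.sum_const_nat (fun k hk => by
      rw [hw]; simp only [hh, (Finset.mem_filter.1 hk).2]; norm_num)
    have rB : ∑ k ∈ B, w h k = B.card * 8 := Finset.sum_const_nat (fun k hk => by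
      rw [hw]; simp only [hh, (Finset.mem_filter.1 hk).2]; norm_num)
    have rC : ∑ k ∈ C, w h k = C.card * 4 := Finset.sum_const_nat (fun k hk => by
      rw [hw]; simp only [hh, (Finset.mem_filter.1 hk).2]; norm_num)
    rw [rA, rB, rC]; ring
  have hrowB : ∀ h : H, Nat.card (FixSub N (h : G)) = 2 →
      ∑ k : H, w h k = 8 * A.card + 8 * B.card := by
    intro h hh
    rw [hpart (w h)]
    have rA : ∑ k ∈ A, w h k = A.card * 8 := Finset.sum_const_nat (fun k hk => by
      rw [hw]; simp only [hh, (Finset.mem_filter.1 hk).2]; norm_num)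
    have rB : ∑ k ∈ B, w h k = B.card * 8 := Finset.sum_const_nat (fun k hk => by
      rw [hw]; simp only [hh, (Finset.mem_filter.1 hk).2]; norm_num)
    have rC : ∑ k ∈ C, w h k = C.card * 0 := Finset.sum_const_nat (fun k hk => by
      rw [hw]; simp only [hh, (Finset.mem_filter.1 hk).2]; norm_num)
    rw [rA, rB, rC]; ring
  have hrowC : ∀ h : H, Nat.card (FixSub N (h : G)) = 1 →
      ∑ k : H, w h k = 4 * A.card + 4 * C.card := by
    intro h hh
    rw [hpart (w h)]
    have rA : ∑ k ∈ A, w h k = A.card * 4 := Finset.sum_const_nat (fun k hk => by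
      rw [hw]; simp only [hh, (Finset.mem_filter.1 hk).2]; norm_num)
    have rB : ∑ k ∈ B, w h k = B.card * 0 := Finset.sum_const_nat (fun k hk => by
      rw [hw]; simp only [hh, (Finset.mem_filter.1 hk).2]; norm_num)
    have rC : ∑ k ∈ C, w h k = C.card * 4 := Finset.sum_const_nat (fun k hk => by
      rw [hw]; simp only [hh, (Finset.mem_filter.1 hk).2]; norm_num)
    rw [rA, rB, rC]; ring
  have htot : ∑ h : H, ∑ k : H, w h k =
      A.card * (16 * A.card + 8 * B.card + 4 * C.card) +
      B.card * (8 * A.card + 8 * B.card) +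
      C.card * (4 * A.card + 4 * C.card) := by
    rw [hpart (fun h => ∑ k : H, w h k)]
    have rA : ∑ h ∈ A, ∑ k : H, w h k = A.card * (16 * A.card + 8 * B.card + 4 * C.card) :=
      Finset.sum_const_nat (fun h hh => hrowA h (Finset.mem_filter.1 hh).2)
    have rB : ∑ h ∈ B, ∑ k : H, w h k = B.card * (8 * A.card + 8 * B.card) :=
      Finset.sum_const_nat (fun h hh => hrowB h (Finset.mem_filter.1 hh).2)
    have rC : ∑ h ∈ C, ∑ k : H, w h k = C.card * (4 * A.card + 4 * C.card) :=
      Finset.sum_const_nat (fun h hh => hrowC h (Finset.mem_filter.1 hh).2)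
    rw [rA, rB, rC]
  -- numeric bound
  have hnum : 3 * Nat.card { p : G × G // Commute p.1 p.2 } ≤ 16 * n ^ 2 := by
    have h1 : 3 * (A.card * (16 * A.card + 8 * B.card + 4 * C.card) +
        B.card * (8 * A.card + 8 * B.card) +
        C.card * (4 * A.card + 4 * C.card)) ≤ 16 * n ^ 2 := by
      rw [hn_part, hγ]
      nlinarith [hβ, Nat.zero_le (A.card * B.card), sq_nonneg (A.card + B.card)]
    calc 3 * Nat.card { p : G × G // Commute p.1 p.2 }
        ≤ 3 * (∑ h : H, ∑ k : H, w h k) := by omega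
      _ ≤ 16 * n ^ 2 := by rw [htot]; exact h1
  -- conclude
  have hcardG : Nat.card G = 4 * n := by
    have hb : Nat.card (H × N) = Nat.card G :=
      Nat.card_congr (Equiv.ofBijective _ ⟨mu_inj hHN', mu_surj hHN⟩)
    rw [← hb, Nat.card_prod, Kcard e, hn]
    ring
  have hnpos : 0 < n := by rw [hn]; exact Nat.card_pos
  rw [commProb_def, hcardG]
  rw [div_le_iff₀ (by positivity)]
  have hcast : (3 : ℚ) * (Nat.card { p : G × G // Commute p.1 p.2 } : ℚ) ≤ 16 * (n : ℚ) ^ 2 := by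
    exact_mod_cast Nat.cast_le.2 hnum
  push_cast
  nlinarith [hcast]

end KFC

theorem exists_fixed_element_of_klein_four_complemented
    (G : Type*) [Group G] [Finite G]
    (N : Subgroup G) [N.Normal]
    (hNiso : Nonempty (N ≃* (Multiplicative (ZMod 2) × Multiplicative (ZMod 2))))
    (H : Subgroup G) (hHN : H ⊔ N = ⊤) (hHN' : H ⊓ N = ⊥)
    (hd : commProb G > 1 / 3) :
    (∃ a ∈ N, a ≠ 1 ∧ ∀ h ∈ H, h * a * h⁻¹ = a) ∧
      Subgroup.center G ≠ ⊥ := by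
  obtain ⟨e⟩ := hNiso
  have key : ∃ a ∈ N, a ≠ 1 ∧ ∀ h ∈ H, h * a * h⁻¹ = a := by
    by_contra hc
    push_neg at hc
    have hmoved : ∀ a : N, a ≠ 1 → ∃ h : H, kact N (h : G) a ≠ a := by
      intro a ha
      have ha' : (a : G) ≠ 1 := fun hcon => ha (by apply Subtype.ext; simpa using hcon)
      obtain ⟨h, hH, hne⟩ := hc (a : G) a.2 ha'
      refine ⟨⟨h, hH⟩, fun hcon => hne ?_⟩
      have := congrArg Subtype.val hcon
      simpa [kact_coe] using this
    have := main_bound e hHN hHN' hmoved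
    linarith
  obtain ⟨a, haN, ha1, hfix⟩ := key
  refine ⟨⟨a, haN, ha1, hfix⟩, ?_⟩
  have hcen : a ∈ Subgroup.center G := by
    rw [Subgroup.mem_center_iff]
    intro g
    have hg : g ∈ H ⊔ N := by rw [hHN]; trivial
    have hle : H ⊔ N ≤ Subgroup.centralizer {a} := by
      apply sup_le
      · intro h hh
        rw [Subgroup.mem_centralizer_iff]
        intro y hy
        rw [Set.mem_singleton_iff] at hy
        rw [hy]
        have h1 := hfix h hh
        have h2 : h * a = a * h := by
          calc h * a = (h * a * h⁻¹) * h := by group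
          _ = a * h := by rw [h1]
        exact h2.symm
      · intro b hb
        rw [Subgroup.mem_centralizer_iff]
        intro y hy
        rw [Set.mem_singleton_iff] at hy
        rw [hy]
        have h3 := congrArg Subtype.val (Kcomm e ⟨a, haN⟩ ⟨b, hb⟩)
        push_cast at h3
        exact h3
    have hmem := hle hg
    rw [Subgroup.mem_centralizer_iff] at hmem
    exact (hmem a (Set.mem_singleton a)).symm
  intro hbot
  rw [hbot] at hcen
  exact ha1 (Subgroup.mem_bot.1 hcen)
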